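/- Let x, x̃ ∈ ℂⁿ be unit vectors and λ, λ̃ ∈ ℂ. Define X = [x; λx] ∈ ℂ^{2n} and X̃ = [x̃; λ̃x̃] ∈ ℂ^{2n} (vertical concatenation). Then cos θ(X, X̃) ≤ cos θ(x, x̃), where cos θ(u, v) := |u^H v| / (‖u‖₂ ‖v‖₂). Consequently |sin θ(x, x̃)| ≤ |sin θ(X, X̃)|. -/

import Mathlib

open Finset

/-- The cosine of the acute angle between the lines spanned by two vectors:
|uᴴv| / (‖u‖₂ ‖v‖₂). -/
noncomputable def cosAngle {m : Type*} [Fintype m] (u v : m → ℂ) : ℝ :=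
  ‖∑ i, (starRingEnd ℂ) (u i) * v i‖ /
    (Real.sqrt (∑ i, ‖u i‖ ^ 2) * Real.sqrt (∑ i, ‖v i‖ ^ 2))

lemma cosAngle_nonneg {m : Type*} [Fintype m] (u v : m → ℂ) : 0 ≤ cosAngle u v := by
  unfold cosAngle
  positivity

theorem stmt8 (n : ℕ) (x x' : Fin n → ℂ) (lam lam' : ℂ)
    (hx : ∑ i, ‖x i‖ ^ 2 = 1) (hx' : ∑ i, ‖x' i‖ ^ 2 = 1) :
    cosAngle (Sum.elim x fun i => lam * x i) (Sum.elim x' fun i => lam' * x' i)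
        ≤ cosAngle x x' ∧
      Real.sqrt (1 - cosAngle x x' ^ 2) ≤
        Real.sqrt (1 - cosAngle (Sum.elim x fun i => lam * x i)
          (Sum.elim x' fun i => lam' * x' i) ^ 2) := by
  set S := ∑ i, (starRingEnd ℂ) (x i) * x' i with hS
  have hcx : cosAngle x x' = ‖S‖ := by
    unfold cosAngle
    rw [hx, hx']
    simp [hS]
  have hnum : (∑ i : Fin n ⊕ Fin n,
      (starRingEnd ℂ) (Sum.elim x (fun i => lam * x i) i) *
        Sum.elim x' (fun i => lam' * x' i) i) = (1 + (starRingEnd ℂ) lam * lam') * S := by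
    rw [Fintype.sum_sum_type]
    simp only [Sum.elim_inl, Sum.elim_inr, map_mul]
    rw [hS, Finset.mul_sum, ← Finset.sum_add_distrib]
    exact Finset.sum_congr rfl fun i _ => by ring
  have hden1 : (∑ i : Fin n ⊕ Fin n,
      ‖Sum.elim x (fun i => lam * x i) i‖ ^ 2) = 1 + ‖lam‖ ^ 2 := by
    rw [Fintype.sum_sum_type]
    simp only [Sum.elim_inl, Sum.elim_inr, norm_mul, mul_pow]
    rw [← Finset.mul_sum, hx]
    ring
  have hden2 : (∑ i : Fin n ⊕ Fin n,
      ‖Sum.elim x' (fun i => lam' * x' i) i‖ ^ 2) = 1 + ‖lam'‖ ^ 2 := by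
    rw [Fintype.sum_sum_type]
    simp only [Sum.elim_inl, Sum.elim_inr, norm_mul, mul_pow]
    rw [← Finset.mul_sum, hx']
    ring
  have hkey : ‖1 + (starRingEnd ℂ) lam * lam'‖ ≤
      Real.sqrt (1 + ‖lam‖ ^ 2) * Real.sqrt (1 + ‖lam'‖ ^ 2) := by
    have h1 : ‖1 + (starRingEnd ℂ) lam * lam'‖ ≤
        1 + ‖lam‖ * ‖lam'‖ := by
      calc ‖1 + (starRingEnd ℂ) lam * lam'‖
          ≤ ‖1‖ + ‖(starRingEnd ℂ) lam * lam'‖ := norm_add_le _ _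
        _ = 1 + ‖lam‖ * ‖lam'‖ := by simp
    refine h1.trans ?_
    rw [← Real.sqrt_mul (by positivity)]
    rw [Real.le_sqrt (by positivity)]
    nlinarith [sq_nonneg (‖lam‖ - ‖lam'‖),
      norm_nonneg lam, norm_nonneg lam',
      mul_nonneg (norm_nonneg lam) (norm_nonneg lam')]
    positivity
  have hcX : cosAngle (Sum.elim x fun i => lam * x i) (Sum.elim x' fun i => lam' * x' i)
      = ‖1 + (starRingEnd ℂ) lam * lam'‖ * ‖S‖ /
        (Real.sqrt (1 + ‖lam‖ ^ 2) * Real.sqrt (1 + ‖lam'‖ ^ 2)) := by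
    unfold cosAngle
    rw [hnum, hden1, hden2, norm_mul]
  have hd1 : (0:ℝ) < Real.sqrt (1 + ‖lam‖ ^ 2) := Real.sqrt_pos.2 (by positivity)
  have hd2 : (0:ℝ) < Real.sqrt (1 + ‖lam'‖ ^ 2) := Real.sqrt_pos.2 (by positivity)
  have hle : cosAngle (Sum.elim x fun i => lam * x i) (Sum.elim x' fun i => lam' * x' i)
      ≤ cosAngle x x' := by
    rw [hcX, hcx, div_le_iff₀ (by positivity)]
    calc ‖1 + (starRingEnd ℂ) lam * lam'‖ * ‖S‖
        ≤ (Real.sqrt (1 + ‖lam‖ ^ 2) * Real.sqrt (1 + ‖lam'‖ ^ 2)) *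
          ‖S‖ := by
          exact mul_le_mul_of_nonneg_right hkey (norm_nonneg S)
      _ = ‖S‖ * (Real.sqrt (1 + ‖lam‖ ^ 2) *
          Real.sqrt (1 + ‖lam'‖ ^ 2)) := by ring
  refine ⟨hle, ?_⟩
  apply Real.sqrt_le_sqrt
  have h0 : 0 ≤ cosAngle (Sum.elim x fun i => lam * x i) (Sum.elim x' fun i => lam' * x' i) :=
    cosAngle_nonneg _ _
  nlinarith [hle, h0]
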